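/- Let K be a finite simplicial complex with filtration f and let M be its set of critical simplices. Then for every simplex σ ∈ K, f(σ) equals the minimum of f(τ) over all critical simplices τ ∈ M with σ ⊆ τ. In particular, the filtration is completely determined by its values on critical simplices. -/

import Mathlib

/-- For every simplex `σ` of a finite filtered simplicial complex, `f σ`
equals the minimum of `f τ` over the critical simplices `τ` containing `σ`. -/
theorem stmt_6 {V : Type*} [Fintype V] [DecidableEq V]
    (K : Finset (Finset V)) (t : ℕ) (f : Finset V → ℕ)
    (hne : ∀ σ ∈ K, σ.Nonempty)
    (hclosed : ∀ σ ∈ K, ∀ τ : Finset V, τ ⊆ σ → τ.Nonempty → τ ∈ K)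
    (hrange : ∀ σ ∈ K, f σ ≤ t)
    (hmono : ∀ τ ∈ K, ∀ σ ∈ K, τ ⊆ σ → f τ ≤ f σ) :
    ∀ σ ∈ K,
      ∃ hcrit : (K.filter (fun τ => σ ⊆ τ ∧ ∀ ρ ∈ K, τ ⊂ ρ → f τ < f ρ)).Nonempty,
        f σ = (K.filter (fun τ => σ ⊆ τ ∧ ∀ ρ ∈ K, τ ⊂ ρ → f τ < f ρ)).inf' hcrit f := by
  intro σ hσ
  classical
  -- set of cofaces of σ with same f value
  set S : Finset (Finset V) := K.filter (fun τ => σ ⊆ τ ∧ f τ = f σ) with hS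
  have hσS : σ ∈ S := by
    simp [hS, hσ]
  obtain ⟨τ, hτS, hmax⟩ := Finset.exists_max_image S (fun τ => τ.card) ⟨σ, hσS⟩
  rw [hS, Finset.mem_filter] at hτS
  obtain ⟨hτK, hστ, hfτ⟩ := hτS
  have hτcrit : τ ∈ K.filter (fun τ => σ ⊆ τ ∧ ∀ ρ ∈ K, τ ⊂ ρ → f τ < f ρ) := by
    rw [Finset.mem_filter]
    refine ⟨hτK, hστ, fun ρ hρ hsub => ?_⟩
    rcases lt_or_eq_of_le (hmono τ hτK ρ hρ hsub.subset) with h | h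
    · exact h
    · exfalso
      have hρS : ρ ∈ S := by
        rw [hS, Finset.mem_filter]
        exact ⟨hρ, hστ.trans hsub.subset, by omega⟩
      have := hmax ρ hρS
      have := Finset.card_lt_card hsub
      omega
  refine ⟨⟨τ, hτcrit⟩, le_antisymm ?_ ?_⟩
  · apply Finset.le_inf'
    intro b hb
    rw [Finset.mem_filter] at hb
    exact hmono σ hσ b hb.1 hb.2.1
  · calc _ ≤ f τ := Finset.inf'_le f hτcrit
      _ = f σ := hfτ
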